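/- arXiv:0906.2215 — 3 statements merged into one kernel-verified Lean document; each statement's English description precedes it below -/
import Mathlib

section
/- For all positive integers a and b, the identity Λ_a · Λ_b = gcd(a,b) · Λ_{lcm(a,b)} holds in the group algebra ℤ[ℂˣ]. -/
/-- `Λ n` : the element of the group algebra `ℤ[ℂˣ]` given by the sum of the
basis elements corresponding to the `n`-th roots of unity (junk value `0` for `n = 0`). -/
noncomputable def Lambda (n : ℕ) : MonoidAlgebra ℤ ℂˣ :=
  if h : n = 0 then 0 else
    haveI : NeZero n := ⟨h⟩
    haveI : Fintype (rootsOfUnity n ℂ) := Fintype.ofFinite _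
    ∑ ζ : rootsOfUnity n ℂ, MonoidAlgebra.single (ζ : ℂˣ) (1 : ℤ)

theorem lambda_mul_lambda (a b : ℕ) (ha : 0 < a) (hb : 0 < b) :
    Lambda a * Lambda b = (Nat.gcd a b : ℤ) • Lambda (Nat.lcm a b) := by
  have ha' : a ≠ 0 := ha.ne'
  have hb' : b ≠ 0 := hb.ne'
  have hL' : Nat.lcm a b ≠ 0 := Nat.lcm_ne_zero ha' hb'
  have hd' : Nat.gcd a b ≠ 0 := Nat.gcd_ne_zero_left ha'
  haveI : NeZero a := ⟨ha'⟩
  haveI : NeZero b := ⟨hb'⟩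
  haveI : NeZero (Nat.lcm a b) := ⟨hL'⟩
  haveI : NeZero (Nat.gcd a b) := ⟨hd'⟩
  classical
  letI : Fintype (rootsOfUnity a ℂ) := Fintype.ofFinite _
  letI : Fintype (rootsOfUnity b ℂ) := Fintype.ofFinite _
  letI : Fintype (rootsOfUnity (Nat.lcm a b) ℂ) := Fintype.ofFinite _
  letI : Fintype (rootsOfUnity (Nat.gcd a b) ℂ) := Fintype.ofFinite _
  have hAL : rootsOfUnity a ℂ ≤ rootsOfUnity (Nat.lcm a b) ℂ :=
    rootsOfUnity_le_of_dvd (Nat.dvd_lcm_left a b)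
  have hBL : rootsOfUnity b ℂ ≤ rootsOfUnity (Nat.lcm a b) ℂ :=
    rootsOfUnity_le_of_dvd (Nat.dvd_lcm_right a b)
  have hDA : rootsOfUnity (Nat.gcd a b) ℂ ≤ rootsOfUnity a ℂ :=
    rootsOfUnity_le_of_dvd (Nat.gcd_dvd_left a b)
  have hDB : rootsOfUnity (Nat.gcd a b) ℂ ≤ rootsOfUnity b ℂ :=
    rootsOfUnity_le_of_dvd (Nat.gcd_dvd_right a b)
  -- the multiplication homomorphism
  let f : rootsOfUnity a ℂ × rootsOfUnity b ℂ →* rootsOfUnity (Nat.lcm a b) ℂ :=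
    { toFun := fun p => ⟨(p.1 : ℂˣ) * (p.2 : ℂˣ), mul_mem (hAL p.1.2) (hBL p.2.2)⟩
      map_one' := by ext; simp
      map_mul' := by
        intro p q
        ext
        push_cast
        exact mul_mul_mul_comm _ _ _ _ }
  -- the kernel of `f` is equivalent to the `gcd`-th roots of unity
  have eker : rootsOfUnity (Nat.gcd a b) ℂ ≃ f.ker :=
    { toFun := fun z =>
        ⟨(⟨(z : ℂˣ), hDA z.2⟩, ⟨(z : ℂˣ)⁻¹, inv_mem (hDB z.2)⟩), by
          have : f (⟨(z : ℂˣ), hDA z.2⟩, ⟨(z : ℂˣ)⁻¹, inv_mem (hDB z.2)⟩) = 1 := by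
            ext; simp [f]
          simpa [MonoidHom.mem_ker] using this⟩
      invFun := fun p => ⟨(p.1.1.1 : ℂˣ), by
        have h1 : (p.1.1.1 : ℂˣ) ^ a = 1 := (mem_rootsOfUnity a _).mp p.1.1.2
        have hker : (p.1.1.1 : ℂˣ) * (p.1.2.1 : ℂˣ) = 1 := by
          have := p.2
          simp only [MonoidHom.mem_ker] at this
          exact congrArg Subtype.val this
        have h2 : (p.1.1.1 : ℂˣ) ^ b = 1 := by
          have : (p.1.1.1 : ℂˣ) = (p.1.2.1 : ℂˣ)⁻¹ := eq_inv_of_mul_eq_one_left hker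
          rw [this, inv_pow, (mem_rootsOfUnity b _).mp p.1.2.2, inv_one]
        exact (mem_rootsOfUnity _ _).mpr <|
          orderOf_dvd_iff_pow_eq_one.mp <|
            Nat.dvd_gcd (orderOf_dvd_of_pow_eq_one h1) (orderOf_dvd_of_pow_eq_one h2)⟩
      left_inv := fun z => by ext; rfl
      right_inv := fun p => by
        have hker : (p.1.1.1 : ℂˣ) * (p.1.2.1 : ℂˣ) = 1 := by
          have := p.2
          simp only [MonoidHom.mem_ker] at this
          exact congrArg Subtype.val this
        apply Subtype.ext
        apply Prod.ext
        · rfl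
        · exact Subtype.ext (inv_eq_of_mul_eq_one_right hker) }
  have hcard_ker : Nat.card f.ker = Nat.gcd a b := by
    rw [← Nat.card_congr eker, Complex.card_rootsOfUnity]
  -- `f` is surjective
  have hsurj : Function.Surjective f := by
    have h1 : Nat.card (rootsOfUnity a ℂ × rootsOfUnity b ℂ) = a * b := by
      rw [Nat.card_prod,
        Complex.card_rootsOfUnity, Complex.card_rootsOfUnity]
    have h2 := Subgroup.card_eq_card_quotient_mul_card_subgroup (f.ker)
    have h3 : Nat.card ((rootsOfUnity a ℂ × rootsOfUnity b ℂ) ⧸ f.ker)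
        = Nat.card f.range :=
      Nat.card_congr (QuotientGroup.quotientKerEquivRange f).toEquiv
    have h4 : Nat.card f.range * Nat.gcd a b = a * b := by
      rw [← h3, ← hcard_ker, ← h2, h1]
    have h5 : Nat.card f.range = Nat.lcm a b := by
      refine Nat.eq_of_mul_eq_mul_right (Nat.pos_of_ne_zero hd') ?_
      rw [h4, ← Nat.gcd_mul_lcm a b, mul_comm]
    have h6 : f.range = ⊤ := by
      apply Subgroup.eq_top_of_card_eq
      rw [h5, Complex.card_rootsOfUnity]
    exact MonoidHom.range_eq_top.mp h6
  -- fiber cardinality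
  have hfiber : ∀ y : rootsOfUnity (Nat.lcm a b) ℂ,
      Fintype.card {p // f p = y} = Nat.gcd a b := by
    intro y
    obtain ⟨x₀, hx₀⟩ := hsurj y
    have e2 : f.ker ≃ {p // f p = y} :=
      { toFun := fun k => ⟨x₀ * k, by rw [map_mul, hx₀, k.2, mul_one]⟩
        invFun := fun p => ⟨x₀⁻¹ * p, by
          simp only [MonoidHom.mem_ker, map_mul, map_inv, hx₀, p.2, inv_mul_cancel]⟩
        left_inv := fun k => by ext1; simp
        right_inv := fun p => by ext1; simp }
    rw [← Fintype.card_congr e2, ← Nat.card_eq_fintype_card, hcard_ker]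
  -- the computation
  rw [Lambda, Lambda, Lambda, dif_neg ha', dif_neg hb', dif_neg hL']
  rw [Finset.sum_mul_sum]
  have key : ∀ (ζ : rootsOfUnity a ℂ) (η : rootsOfUnity b ℂ),
      MonoidAlgebra.single ((ζ : ℂˣ)) (1 : ℤ) * MonoidAlgebra.single ((η : ℂˣ)) (1 : ℤ)
        = MonoidAlgebra.single ((f (ζ, η) : ℂˣ)) (1 : ℤ) := by
    intro ζ η
    rw [MonoidAlgebra.single_mul_single, one_mul]
    rfl
  simp only [key]
  rw [← Fintype.sum_prod_type
    (f := fun p : rootsOfUnity a ℂ × rootsOfUnity b ℂ =>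
      MonoidAlgebra.single ((f p : ℂˣ)) (1 : ℤ))]
  rw [← Fintype.sum_fiberwise (fun p => f p)
    (fun p => MonoidAlgebra.single ((f p : ℂˣ)) (1 : ℤ))]
  rw [Finset.smul_sum]
  refine Finset.sum_congr rfl fun y _ => ?_
  have : ∀ p : {p // f p = y},
      MonoidAlgebra.single ((f (p : rootsOfUnity a ℂ × rootsOfUnity b ℂ) : ℂˣ)) (1 : ℤ)
        = MonoidAlgebra.single ((y : ℂˣ)) (1 : ℤ) := fun p => by rw [p.2]
  rw [Finset.sum_congr rfl fun p _ => this p, Finset.sum_const, Finset.card_univ, hfiber y,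
    Nat.cast_smul_eq_nsmul]
end

section
/- For every positive integer k, G(2(4k+1)(4k+3); 4k+3, 2(4k+1), 4(4k+1)) = 0, where G is the weighted genus expression d²/(w₀w₁w₂) − d·Σ_{i<j} gcd(w_i,w_j)/(w_i w_j) + Σ_i gcd(d,w_i)/w_i − 1 evaluated in ℚ with d = 2(4k+1)(4k+3) and (w₀,w₁,w₂) = (4k+3, 2(4k+1), 4(4k+1)). -/
/-- Twice the genus of a quasismooth degree-`d` curve in the weighted projective
plane `ℙ(w₀, w₁, w₂)`, by Fletcher's weighted genus formula:
`2g = d²/(w₀w₁w₂) − d·Σ_{i<j} gcd(wᵢ,wⱼ)/(wᵢwⱼ) + Σᵢ gcd(d,wᵢ)/wᵢ − 1`. -/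
def wgenus (d w0 w1 w2 : ℕ) : ℚ :=
  (d : ℚ) ^ 2 / ((w0 : ℚ) * (w1 : ℚ) * (w2 : ℚ))
    - (d : ℚ) * ((Nat.gcd w0 w1 : ℚ) / ((w0 : ℚ) * (w1 : ℚ))
        + (Nat.gcd w0 w2 : ℚ) / ((w0 : ℚ) * (w2 : ℚ))
        + (Nat.gcd w1 w2 : ℚ) / ((w1 : ℚ) * (w2 : ℚ)))
    + (Nat.gcd d w0 : ℚ) / (w0 : ℚ) + (Nat.gcd d w1 : ℚ) / (w1 : ℚ)
    + (Nat.gcd d w2 : ℚ) / (w2 : ℚ) - 1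

theorem branch_curve_D1_rational (k : ℕ) (hk : 0 < k) :
    wgenus (2 * (4 * k + 1) * (4 * k + 3)) (4 * k + 3) (2 * (4 * k + 1)) (4 * (4 * k + 1))
      = 0 := by
  have h2 : Nat.Coprime (4 * k + 3) 2 := by
    exact Nat.coprime_two_right.mpr ⟨2 * k + 1, by ring⟩
  have hmn : Nat.Coprime (4 * k + 3) (4 * k + 1) := by
    have : Nat.gcd (4 * k + 3) (4 * k + 1) ∣ 2 := by
      have := Nat.dvd_sub (Nat.gcd_dvd_left (4 * k + 3) (4 * k + 1))
        (Nat.gcd_dvd_right (4 * k + 3) (4 * k + 1))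
      simpa using this
    have hodd := Nat.Coprime.eq_one_of_dvd h2.symm
    rcases (Nat.le_of_dvd (by norm_num) this).lt_or_eq with h | h
    · interval_cases h' : Nat.gcd (4 * k + 3) (4 * k + 1)
      · exact absurd h' (Nat.gcd_ne_zero_left (by omega))
      · exact h'
    · exfalso
      have hd2 : 2 ∣ 4 * k + 3 := h ▸ Nat.gcd_dvd_left _ _
      omega
  have g01 : Nat.gcd (4 * k + 3) (2 * (4 * k + 1)) = 1 :=
    Nat.Coprime.mul_right h2 hmn
  have g02 : Nat.gcd (4 * k + 3) (4 * (4 * k + 1)) = 1 := by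
    have h4 : 4 * (4 * k + 1) = 2 * (2 * (4 * k + 1)) := by ring
    rw [h4]
    exact Nat.Coprime.mul_right h2 (Nat.Coprime.mul_right h2 hmn)
  have g12 : Nat.gcd (2 * (4 * k + 1)) (4 * (4 * k + 1)) = 2 * (4 * k + 1) := by
    apply Nat.gcd_eq_left
    exact ⟨2, by ring⟩
  have gd0 : Nat.gcd (2 * (4 * k + 1) * (4 * k + 3)) (4 * k + 3) = 4 * k + 3 :=
    Nat.gcd_eq_right ⟨2 * (4 * k + 1), by ring⟩
  have gd1 : Nat.gcd (2 * (4 * k + 1) * (4 * k + 3)) (2 * (4 * k + 1)) = 2 * (4 * k + 1) :=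
    Nat.gcd_eq_right ⟨4 * k + 3, by ring⟩
  have gd2 : Nat.gcd (2 * (4 * k + 1) * (4 * k + 3)) (4 * (4 * k + 1)) = 2 * (4 * k + 1) := by
    have h1 : 2 * (4 * k + 1) * (4 * k + 3) = 2 * (4 * k + 1) * (4 * k + 3) := rfl
    have h4 : 4 * (4 * k + 1) = 2 * (4 * k + 1) * 2 := by ring
    rw [h4, Nat.gcd_mul_left]
    have : Nat.gcd (4 * k + 3) 2 = 1 := h2
    rw [this, Nat.mul_one]
  unfold wgenus
  rw [g01, g02, g12, gd0, gd1, gd2]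
  have hm : ((4 * k + 3 : ℕ) : ℚ) ≠ 0 := by positivity
  have hn : ((4 * k + 1 : ℕ) : ℚ) ≠ 0 := by positivity
  push_cast
  have hm' : (4 * (k : ℚ) + 3) ≠ 0 := by positivity
  have hn' : (4 * (k : ℚ) + 1) ≠ 0 := by positivity
  field_simp
  ring
end

section
/- For all integers a₀, a₁, a₂, a₃ ≥ 2 and all complex numbers x, y, z, t: if a₀x^{a₀−1}y + t^{a₃} = 0, x^{a₀} + a₁y^{a₁−1}z = 0, y^{a₁} + a₂z^{a₂−1}t = 0, and z^{a₂} + a₃t^{a₃−1}x = 0, then x = y = z = t = 0. Equivalently, the four partial derivatives of f(x,y,z,t) = x^{a₀}y + y^{a₁}z + z^{a₂}t + t^{a₃}x have no common zero in ℂ⁴ other than the origin. -/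
/-- Quasismoothness of Kollár's cycle-type hypersurface: the partial derivatives of
`f(x,y,z,t) = x^{a₀}y + y^{a₁}z + z^{a₂}t + t^{a₃}x` have no common zero in `ℂ⁴`
other than the origin, whenever all `aᵢ ≥ 2`. -/
theorem quasismooth_cycle_type (a₀ a₁ a₂ a₃ : ℕ)
    (h₀ : 2 ≤ a₀) (h₁ : 2 ≤ a₁) (h₂ : 2 ≤ a₂) (h₃ : 2 ≤ a₃) (x y z t : ℂ)
    (e₀ : (a₀ : ℂ) * x ^ (a₀ - 1) * y + t ^ a₃ = 0)
    (e₁ : x ^ a₀ + (a₁ : ℂ) * y ^ (a₁ - 1) * z = 0)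
    (e₂ : y ^ a₁ + (a₂ : ℂ) * z ^ (a₂ - 1) * t = 0)
    (e₃ : z ^ a₂ + (a₃ : ℂ) * t ^ (a₃ - 1) * x = 0) :
    x = 0 ∧ y = 0 ∧ z = 0 ∧ t = 0 := by
  by_cases hx : x = 0
  · subst hx
    rw [zero_pow (by omega : a₀ - 1 ≠ 0)] at e₀
    simp only [mul_zero, zero_mul, zero_add] at e₀ e₃
    have ht : t = 0 := pow_eq_zero_iff (by omega : a₃ ≠ 0) |>.mp e₀
    subst ht
    simp only [mul_zero, add_zero] at e₂ e₃
    have hz : z = 0 := pow_eq_zero_iff (by omega : a₂ ≠ 0) |>.mp e₃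
    subst hz
    exact ⟨rfl, pow_eq_zero_iff (by omega : a₁ ≠ 0) |>.mp e₂, rfl, rfl⟩
  · exfalso
    have hy : y ≠ 0 := by
      intro hy; subst hy
      rw [zero_pow (by omega : a₁ - 1 ≠ 0)] at e₁
      simp only [mul_zero, zero_mul, add_zero] at e₁
      exact hx (pow_eq_zero_iff (by omega : a₀ ≠ 0) |>.mp e₁)
    have hz : z ≠ 0 := by
      intro hz; subst hz
      simp only [mul_zero, add_zero] at e₁
      exact hx (pow_eq_zero_iff (by omega : a₀ ≠ 0) |>.mp e₁)
    have ht : t ≠ 0 := by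
      intro ht; subst ht
      simp only [mul_zero, add_zero] at e₂
      exact hy (pow_eq_zero_iff (by omega : a₁ ≠ 0) |>.mp e₂)
    have f₀ : (a₀ : ℂ) * x ^ (a₀ - 1) * y = -t ^ a₃ := eq_neg_of_add_eq_zero_left e₀
    have f₁ : (a₁ : ℂ) * y ^ (a₁ - 1) * z = -x ^ a₀ := eq_neg_of_add_eq_zero_right e₁
    have f₂ : (a₂ : ℂ) * z ^ (a₂ - 1) * t = -y ^ a₁ := eq_neg_of_add_eq_zero_right e₂
    have f₃ : (a₃ : ℂ) * t ^ (a₃ - 1) * x = -z ^ a₂ := eq_neg_of_add_eq_zero_right e₃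
    have p0 : x ^ (a₀ - 1) * x = x ^ a₀ := by
      rw [← pow_succ, Nat.sub_add_cancel (by omega)]
    have p1 : y ^ (a₁ - 1) * y = y ^ a₁ := by
      rw [← pow_succ, Nat.sub_add_cancel (by omega)]
    have p2 : z ^ (a₂ - 1) * z = z ^ a₂ := by
      rw [← pow_succ, Nat.sub_add_cancel (by omega)]
    have p3 : t ^ (a₃ - 1) * t = t ^ a₃ := by
      rw [← pow_succ, Nat.sub_add_cancel (by omega)]
    have key1 : ((a₀ : ℂ) * x ^ (a₀ - 1) * y) * (((a₁ : ℂ) * y ^ (a₁ - 1) * z) *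
        (((a₂ : ℂ) * z ^ (a₂ - 1) * t) * ((a₃ : ℂ) * t ^ (a₃ - 1) * x))) =
        (-t ^ a₃) * ((-x ^ a₀) * ((-y ^ a₁) * (-z ^ a₂))) := by
      rw [f₀, f₁, f₂, f₃]
    have key : ((a₀ : ℂ) * a₁ * a₂ * a₃) * (x ^ a₀ * y ^ a₁ * z ^ a₂ * t ^ a₃) =
        x ^ a₀ * y ^ a₁ * z ^ a₂ * t ^ a₃ := by
      linear_combination key1 - ((a₀ : ℂ) * a₁ * a₂ * a₃) *
        (y ^ a₁ * z ^ a₂ * t ^ a₃ * p0 + (x ^ (a₀ - 1) * x) * z ^ a₂ * t ^ a₃ * p1 +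
         (x ^ (a₀ - 1) * x) * (y ^ (a₁ - 1) * y) * t ^ a₃ * p2 +
         (x ^ (a₀ - 1) * x) * (y ^ (a₁ - 1) * y) * (z ^ (a₂ - 1) * z) * p3)
    have hP : x ^ a₀ * y ^ a₁ * z ^ a₂ * t ^ a₃ ≠ 0 :=
      mul_ne_zero (mul_ne_zero (mul_ne_zero (pow_ne_zero _ hx) (pow_ne_zero _ hy))
        (pow_ne_zero _ hz)) (pow_ne_zero _ ht)
    have h1 : ((a₀ : ℂ) * a₁ * a₂ * a₃) = 1 :=
      mul_right_cancel₀ hP (key.trans (one_mul _).symm)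
    have h2 : a₀ * a₁ * a₂ * a₃ = 1 := by exact_mod_cast h1
    have h3 : 2 * 2 * 2 * 2 ≤ a₀ * a₁ * a₂ * a₃ :=
      Nat.mul_le_mul (Nat.mul_le_mul (Nat.mul_le_mul h₀ h₁) h₂) h₃
    omega
end
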